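/- Let n ≥ 2. The following conjugation rules hold in UVB_n: (1) for 1 ≤ i < j ≤ n and any k with k < i−1, or i < k < j−1, or k > j: ρ_k λ_{i,j} ρ_k = λ_{i,j} and ρ_k λ_{j,i} ρ_k = λ_{j,i}; (2) for 1 < i < j ≤ n: ρ_{i−1} λ_{i,j} ρ_{i−1} = λ_{i−1,j} and ρ_{i−1} λ_{j,i} ρ_{i−1} = λ_{j,i−1}; (3) for 1 ≤ i < j ≤ n: ρ_i λ_{i,i+1} ρ_i = λ_{i+1,i}, ρ_i λ_{i+1,i} ρ_i = λ_{i,i+1}, and if i < j−1 also ρ_i λ_{i,j} ρ_i = λ_{i+1,j} and ρ_i λ_{j,i} ρ_i = λ_{j,i+1}; (4) for 1 ≤ i+1 < j ≤ n: ρ_{j−1} λ_{i,j} ρ_{j−1} = λ_{i,j−1} and ρ_{j−1} λ_{j,i} ρ_{j−1} = λ_{j−1,i}; (5) for 1 ≤ i < j < n: ρ_j λ_{i,j} ρ_j = λ_{i,j+1} and ρ_j λ_{j,i} ρ_j = λ_{j+1,i}. -/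

import Mathlib

/-!  Common setup: the unrestricted virtual braid group `UVB n`, its generators
σ_k, ρ_k (1-based indices), the elements λ_{i,j} and B_{i,j}, the permutation
homomorphism ι (characterized by `IsIota`), the section s : S_n → UVB n
(characterized by `IsPermSection`), and fused Markov equivalence. -/

/-- Generators of the unrestricted virtual braid group `UVB n`:
`Sum.inl i` is the classical generator σ_{i+1} and `Sum.inr i` is the virtual
generator ρ_{i+1}, for `i : Fin (n-1)` (so the 1-based indices are `1, …, n-1`). -/
abbrev UVBGen (n : ℕ) := Sum (Fin (n - 1)) (Fin (n - 1))

namespace UVBGen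
def sg {n : ℕ} (i : Fin (n - 1)) : FreeGroup (UVBGen n) := FreeGroup.of (Sum.inl i)
def rg {n : ℕ} (i : Fin (n - 1)) : FreeGroup (UVBGen n) := FreeGroup.of (Sum.inr i)
end UVBGen

open UVBGen in
/-- The defining relations of the unrestricted virtual braid group. -/
def uvbRels (n : ℕ) : Set (FreeGroup (UVBGen n)) :=
  {r | (∃ i j : Fin (n - 1), (j : ℕ) = (i : ℕ) + 1 ∧
          (r = sg i * sg j * sg i * (sg j * sg i * sg j)⁻¹ ∨
           r = rg i * rg j * rg i * (rg j * rg i * rg j)⁻¹ ∨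
           r = rg i * rg j * sg i * (sg j * rg i * rg j)⁻¹ ∨
           r = rg i * sg j * sg i * (sg j * sg i * rg j)⁻¹ ∨
           r = rg j * sg i * sg j * (sg i * sg j * rg i)⁻¹)) ∨
       (∃ i j : Fin (n - 1), ((i : ℕ) + 2 ≤ (j : ℕ) ∨ (j : ℕ) + 2 ≤ (i : ℕ)) ∧
          (r = sg i * sg j * (sg j * sg i)⁻¹ ∨
           r = rg i * rg j * (rg j * rg i)⁻¹ ∨
           r = sg i * rg j * (rg j * sg i)⁻¹)) ∨
       (∃ i : Fin (n - 1), r = rg i * rg i)}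

/-- The unrestricted virtual braid group on `n` strands. -/
abbrev UVB (n : ℕ) := PresentedGroup (uvbRels n)

namespace UVB

/-- The generator σ_k (1-based index; meaningful for `1 ≤ k ≤ n-1`, junk value `1` otherwise). -/
def sigma (n k : ℕ) : UVB n :=
  if h : 1 ≤ k ∧ k ≤ n - 1 then PresentedGroup.of (Sum.inl ⟨k - 1, by omega⟩) else 1

/-- The generator ρ_k (1-based index; meaningful for `1 ≤ k ≤ n-1`, junk value `1` otherwise). -/
def rho (n k : ℕ) : UVB n :=
  if h : 1 ≤ k ∧ k ≤ n - 1 then PresentedGroup.of (Sum.inr ⟨k - 1, by omega⟩) else 1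

/-- The element λ_{i,j} of `UVB n` (1-based indices `1 ≤ i ≠ j ≤ n`; junk value `1` if `i = j`).
For `i < j`:  `λ_{i,j} = ρ_{j-1}⋯ρ_{i+1} · ρ_i σ_i⁻¹ · ρ_{i+1}⋯ρ_{j-1}` and
`λ_{j,i} = ρ_{j-1}⋯ρ_{i+1} · σ_i⁻¹ ρ_i · ρ_{i+1}⋯ρ_{j-1}`. -/
def lam (n i j : ℕ) : UVB n :=
  if i < j then
    (((List.range' (i + 1) (j - 1 - i)).reverse.map (rho n)).prod) *
      (rho n i * (sigma n i)⁻¹) *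
      (((List.range' (i + 1) (j - 1 - i)).map (rho n)).prod)
  else if j < i then
    (((List.range' (j + 1) (i - 1 - j)).reverse.map (rho n)).prod) *
      ((sigma n j)⁻¹ * rho n j) *
      (((List.range' (j + 1) (i - 1 - j)).map (rho n)).prod)
  else 1

/-- The element `B_{i,j} = ρ_{j-1}ρ_{j-2}⋯ρ_{i+1}ρ_i` for `i < j`, and `1` otherwise. -/
def B (n i j : ℕ) : UVB n :=
  if i < j then ((List.range' i (j - i)).reverse.map (rho n)).prod else 1

/-- The subgroup `U_j` of `UVB n` generated by `{λ_{i,j}, λ_{j,i} : 1 ≤ i < j}`. -/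
def U (n j : ℕ) : Subgroup (UVB n) :=
  Subgroup.closure {x | ∃ i, 1 ≤ i ∧ i < j ∧ (x = lam n i j ∨ x = lam n j i)}

end UVB

/-- `ι : UVB n →* S_n` is the homomorphism sending σ_k and ρ_k to the
transposition (k, k+1) (written 0-based on `Fin n`). -/
def IsIota (n : ℕ) (ι : UVB n →* Equiv.Perm (Fin n)) : Prop :=
  ∀ (k : ℕ) (h1 : 1 ≤ k) (h2 : k ≤ n - 1),
    ι (UVB.sigma n k) = Equiv.swap ⟨k - 1, by omega⟩ ⟨k, by omega⟩ ∧
    ι (UVB.rho n k) = Equiv.swap ⟨k - 1, by omega⟩ ⟨k, by omega⟩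

/-- `s : S_n →* UVB n` is the homomorphism sending the transposition (k, k+1) to ρ_k. -/
def IsPermSection (n : ℕ) (s : Equiv.Perm (Fin n) →* UVB n) : Prop :=
  ∀ (k : ℕ) (h1 : 1 ≤ k) (h2 : k ≤ n - 1),
    s (Equiv.swap ⟨k - 1, by omega⟩ ⟨k, by omega⟩) = UVB.rho n k

/-- The number of orbits of a permutation of `Fin n`
(= number of fixed points + number of nontrivial cycles). -/
def numOrbits {n : ℕ} (π : Equiv.Perm (Fin n)) : ℕ :=
  (Finset.univ.filter fun x => π x = x).card + π.cycleType.card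

namespace UVB

private def embedGen (n : ℕ) : UVBGen n → UVBGen (n + 1)
  | Sum.inl i => Sum.inl ⟨i.val, by have := i.isLt; omega⟩
  | Sum.inr i => Sum.inr ⟨i.val, by have := i.isLt; omega⟩

open UVBGen in
/-- The natural inclusion `UVB n →* UVB (n+1)` (σ_k ↦ σ_k, ρ_k ↦ ρ_k). -/
def incl (n : ℕ) : UVB n →* UVB (n + 1) :=
  PresentedGroup.toGroup (f := fun x => PresentedGroup.of (embedGen n x)) (by
    have key : (FreeGroup.lift fun x => (PresentedGroup.of (embedGen n x) : UVB (n + 1)))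
        = (PresentedGroup.mk (uvbRels (n + 1))).comp (FreeGroup.map (embedGen n)) := by
      ext x
      simp [PresentedGroup.of]
    intro r hr
    rw [key]
    simp only [MonoidHom.comp_apply]
    have hmem : FreeGroup.map (embedGen n) r ∈ uvbRels (n + 1) := by
      have hsg : ∀ i : Fin (n - 1), FreeGroup.map (embedGen n) (sg i)
          = sg (⟨i.val, by have := i.isLt; omega⟩ : Fin (n + 1 - 1)) := by
        intro i; simp [sg, embedGen]
      have hrg : ∀ i : Fin (n - 1), FreeGroup.map (embedGen n) (rg i)
          = rg (⟨i.val, by have := i.isLt; omega⟩ : Fin (n + 1 - 1)) := by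
        intro i; simp [rg, embedGen]
      rcases hr with ⟨i, j, hij, hc⟩ | ⟨i, j, hij, hc⟩ | ⟨i, hc⟩
      · refine Or.inl ⟨⟨i.val, by have := i.isLt; omega⟩, ⟨j.val, by have := j.isLt; omega⟩,
          by simpa using hij, ?_⟩
        rcases hc with h | h | h | h | h <;> subst h <;>
          simp only [map_mul, map_inv, hsg, hrg] <;> tauto
      · refine Or.inr (Or.inl ⟨⟨i.val, by have := i.isLt; omega⟩, ⟨j.val, by have := j.isLt; omega⟩,
          by simpa using hij, ?_⟩)
        rcases hc with h | h | h <;> subst h <;>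
          simp only [map_mul, map_inv, hsg, hrg] <;> tauto
      · refine Or.inr (Or.inr ⟨⟨i.val, by have := i.isLt; omega⟩, ?_⟩)
        subst hc
        simp only [map_mul, hsg, hrg]
    exact (QuotientGroup.eq_one_iff _).mpr (Subgroup.subset_normalClosure hmem))

end UVB

/-- The elementary fused Markov moves on the disjoint union of the groups `UVB n`:
conjugation, and the three right stabilizations (positive, negative, virtual). -/
inductive MarkovBase : (Σ n, UVB n) → (Σ n, UVB n) → Prop
  | conj (n : ℕ) (α γ : UVB n) : MarkovBase ⟨n, α⟩ ⟨n, γ * α * γ⁻¹⟩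
  | stabPos (n : ℕ) (α : UVB n) :
      MarkovBase ⟨n, α⟩ ⟨n + 1, UVB.incl n α * UVB.sigma (n + 1) n⟩
  | stabNeg (n : ℕ) (α : UVB n) :
      MarkovBase ⟨n, α⟩ ⟨n + 1, UVB.incl n α * (UVB.sigma (n + 1) n)⁻¹⟩
  | stabVirt (n : ℕ) (α : UVB n) :
      MarkovBase ⟨n, α⟩ ⟨n + 1, UVB.incl n α * UVB.rho (n + 1) n⟩

/-- Fused Markov equivalence: the smallest equivalence relation generated by the
elementary Markov moves.  By Kamada's theorem, two unrestricted virtual braids are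
fused Markov equivalent iff their closures are equivalent fused links. -/
def Markov : (Σ n, UVB n) → (Σ n, UVB n) → Prop := Relation.EqvGen MarkovBase

/-! ## Statement 4 -/
section Helpers
variable {G : Type*} [Group G]

namespace UVBP

/-- basic relation extraction -/
lemma rel_eq {n : ℕ} {a b : FreeGroup (UVBGen n)} (h : a * b⁻¹ ∈ uvbRels n) :
    PresentedGroup.mk (uvbRels n) a = PresentedGroup.mk (uvbRels n) b := by
  have h1 : PresentedGroup.mk (uvbRels n) (a * b⁻¹) = 1 :=
    (QuotientGroup.eq_one_iff _).mpr (Subgroup.subset_normalClosure h)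
  rw [map_mul, map_inv, mul_inv_eq_one] at h1
  exact h1

lemma rho_eq {n : ℕ} (k : ℕ) (h1 : 1 ≤ k) (h2 : k ≤ n - 1) :
    UVB.rho n k = PresentedGroup.mk (uvbRels n) (UVBGen.rg ⟨k - 1, by omega⟩) := by
  rw [UVB.rho, dif_pos ⟨h1, h2⟩]; rfl

lemma sigma_eq {n : ℕ} (k : ℕ) (h1 : 1 ≤ k) (h2 : k ≤ n - 1) :
    UVB.sigma n k = PresentedGroup.mk (uvbRels n) (UVBGen.sg ⟨k - 1, by omega⟩) := by
  rw [UVB.sigma, dif_pos ⟨h1, h2⟩]; rfl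

lemma rho_sq {n : ℕ} (k : ℕ) : UVB.rho n k * UVB.rho n k = 1 := by
  by_cases h : 1 ≤ k ∧ k ≤ n - 1
  · rw [rho_eq k h.1 h.2, ← map_mul]
    have hm : (UVBGen.rg ⟨k - 1, by omega⟩ * UVBGen.rg ⟨k - 1, by omega⟩ :
        FreeGroup (UVBGen n)) ∈ uvbRels n := Or.inr (Or.inr ⟨⟨k - 1, by omega⟩, rfl⟩)
    exact (QuotientGroup.eq_one_iff _).mpr (Subgroup.subset_normalClosure hm)
  · rw [UVB.rho, dif_neg h, one_mul]

lemma rho_inv {n : ℕ} (k : ℕ) : (UVB.rho n k)⁻¹ = UVB.rho n k :=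
  inv_eq_of_mul_eq_one_right (rho_sq k)

lemma braid_rr {n : ℕ} (k : ℕ) (h1 : 1 ≤ k) (h2 : k + 1 ≤ n - 1) :
    UVB.rho n k * UVB.rho n (k + 1) * UVB.rho n k
      = UVB.rho n (k + 1) * UVB.rho n k * UVB.rho n (k + 1) := by
  rw [rho_eq k h1 (by omega), rho_eq (k + 1) (by omega) h2]
  simp only [← map_mul]
  exact rel_eq (Or.inl ⟨⟨k - 1, by omega⟩, ⟨k, by omega⟩,
    (by show k = k - 1 + 1; omega), Or.inr (Or.inl rfl)⟩)

lemma rel_c {n : ℕ} (k : ℕ) (h1 : 1 ≤ k) (h2 : k + 1 ≤ n - 1) :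
    UVB.rho n k * UVB.rho n (k + 1) * UVB.sigma n k
      = UVB.sigma n (k + 1) * UVB.rho n k * UVB.rho n (k + 1) := by
  rw [rho_eq k h1 (by omega), rho_eq (k + 1) (by omega) h2,
    sigma_eq k h1 (by omega), sigma_eq (k + 1) (by omega) h2]
  simp only [← map_mul]
  exact rel_eq (Or.inl ⟨⟨k - 1, by omega⟩, ⟨k, by omega⟩,
    (by show k = k - 1 + 1; omega), Or.inr (Or.inr (Or.inl rfl))⟩)

lemma commute_rho_rho {n : ℕ} (k l : ℕ) (hk1 : 1 ≤ k) (hk2 : k ≤ n - 1)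
    (hl1 : 1 ≤ l) (hl2 : l ≤ n - 1) (h : k + 2 ≤ l ∨ l + 2 ≤ k) :
    Commute (UVB.rho n k) (UVB.rho n l) := by
  have : UVB.rho n k * UVB.rho n l = UVB.rho n l * UVB.rho n k := by
    rw [rho_eq k hk1 hk2, rho_eq l hl1 hl2]
    simp only [← map_mul]
    exact rel_eq (Or.inr (Or.inl ⟨⟨k - 1, by omega⟩, ⟨l - 1, by omega⟩,
      (by show k - 1 + 2 ≤ l - 1 ∨ l - 1 + 2 ≤ k - 1; omega),
      Or.inr (Or.inl rfl)⟩))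
  exact this

lemma commute_rho_sigma {n : ℕ} (k l : ℕ) (hk1 : 1 ≤ k) (hk2 : k ≤ n - 1)
    (hl1 : 1 ≤ l) (hl2 : l ≤ n - 1) (h : k + 2 ≤ l ∨ l + 2 ≤ k) :
    Commute (UVB.rho n k) (UVB.sigma n l) := by
  have : UVB.sigma n l * UVB.rho n k = UVB.rho n k * UVB.sigma n l := by
    rw [rho_eq k hk1 hk2, sigma_eq l hl1 hl2]
    simp only [← map_mul]
    exact rel_eq (Or.inr (Or.inl ⟨⟨l - 1, by omega⟩, ⟨k - 1, by omega⟩,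
      (by show l - 1 + 2 ≤ k - 1 ∨ k - 1 + 2 ≤ l - 1; omega),
      Or.inr (Or.inr rfl)⟩))
  exact this.symm

end UVBP
end Helpers
namespace UVBP

section GroupHelpers
variable {G : Type*} [Group G]

/-- conj by a commuting involution is identity -/
lemma conj_of_commute {a x : G} (h : Commute a x) (ha : a * a = 1) :
    a * x * a = x := by
  rw [h.eq, mul_assoc, ha, mul_one]

/-- pull a conjugator through a commuting sandwich -/
lemma sand {a b x : G} (h : Commute a b) :
    a * (b⁻¹ * x * b) * a = b⁻¹ * (a * x * a) * b := by
  have h1 : a * b⁻¹ = b⁻¹ * a := h.inv_right.eq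
  calc a * (b⁻¹ * x * b) * a = (a * b⁻¹) * (x * (b * a)) := by group
    _ = (b⁻¹ * a) * (x * (a * b)) := by rw [h1, ← h.eq]
    _ = b⁻¹ * (a * x * a) * b := by group

lemma conj3 (a b x : G) :
    a * (b * (a * x * a) * b) * a = (a * b * a) * x * (a * b * a) := by group

end GroupHelpers

section Chains
variable {n : ℕ}

/-- product ρ_a ρ_{a+1} ⋯ ρ_{a+m-1} -/
def Rr (n a m : ℕ) : UVB n := ((List.range' a m).map (UVB.rho n)).prod

@[simp] lemma Rr_zero (a : ℕ) : Rr n a 0 = 1 := by simp [Rr]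

lemma Rr_succ_left (a m : ℕ) : Rr n a (m + 1) = UVB.rho n a * Rr n (a + 1) m := by
  simp [Rr, List.range'_succ]

lemma Rr_succ_right (a m : ℕ) : Rr n a (m + 1) = Rr n a m * UVB.rho n (a + m) := by
  simp [Rr, List.range'_concat]

lemma Rr_one (a : ℕ) : Rr n a 1 = UVB.rho n a := by
  rw [show (1 : ℕ) = 0 + 1 from rfl, Rr_succ_left]; simp

lemma Rr_append (a m1 m2 : ℕ) : Rr n a (m1 + m2) = Rr n a m1 * Rr n (a + m1) m2 := by
  rw [Rr, Rr, Rr, ← List.prod_append, ← List.map_append, List.range'_append_1]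

lemma rev_prod_eq_inv (l : List ℕ) :
    ((l.reverse.map (UVB.rho n)).prod) = ((l.map (UVB.rho n)).prod)⁻¹ := by
  induction l with
  | nil => simp
  | cons a l ih =>
      simp only [List.reverse_cons, List.map_append, List.prod_append, List.map_cons,
        List.prod_cons, List.map_nil, List.prod_nil, mul_one, ih, mul_inv_rev, rho_inv]

lemma commute_rho_Rr (k a m : ℕ) (hk1 : 1 ≤ k) (hk2 : k ≤ n - 1)
    (h : ∀ x, a ≤ x → x < a + m → (1 ≤ x ∧ x ≤ n - 1) ∧ (k + 2 ≤ x ∨ x + 2 ≤ k)) :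
    Commute (UVB.rho n k) (Rr n a m) := by
  apply Commute.list_prod_right
  intro y hy
  simp only [List.mem_map, List.mem_range'_1] at hy
  obtain ⟨x, ⟨hx1, hx2⟩, rfl⟩ := hy
  obtain ⟨⟨hb1, hb2⟩, hf⟩ := h x hx1 hx2
  exact commute_rho_rho k x hk1 hk2 hb1 hb2 hf

/-- the conjugated core: `chain i j c = (ρ_{i+1}⋯ρ_{j-1})⁻¹ c (ρ_{i+1}⋯ρ_{j-1})` -/
def chain (n i j : ℕ) (c : UVB n) : UVB n :=
  (Rr n (i + 1) (j - 1 - i))⁻¹ * c * Rr n (i + 1) (j - 1 - i)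

lemma lam_lt (i j : ℕ) (h : i < j) :
    UVB.lam n i j = chain n i j (UVB.rho n i * (UVB.sigma n i)⁻¹) := by
  rw [UVB.lam, if_pos h, chain, rev_prod_eq_inv]; rfl

lemma lam_gt (i j : ℕ) (h : i < j) :
    UVB.lam n j i = chain n i j ((UVB.sigma n i)⁻¹ * UVB.rho n i) := by
  rw [UVB.lam, if_neg (by omega), if_pos h, chain, rev_prod_eq_inv]; rfl

end Chains
end UVBP
namespace UVBP
variable {n : ℕ}

lemma s_rho (k : ℕ) (h1 : 1 ≤ k) (h2 : k + 1 ≤ n - 1) :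
    SemiconjBy (UVB.rho n k * UVB.rho n (k + 1)) (UVB.rho n k) (UVB.rho n (k + 1)) := by
  show UVB.rho n k * UVB.rho n (k + 1) * UVB.rho n k
      = UVB.rho n (k + 1) * (UVB.rho n k * UVB.rho n (k + 1))
  rw [← mul_assoc]; exact braid_rr k h1 h2

lemma s_sigma (k : ℕ) (h1 : 1 ≤ k) (h2 : k + 1 ≤ n - 1) :
    SemiconjBy (UVB.rho n k * UVB.rho n (k + 1)) (UVB.sigma n k) (UVB.sigma n (k + 1)) := by
  show UVB.rho n k * UVB.rho n (k + 1) * UVB.sigma n k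
      = UVB.sigma n (k + 1) * (UVB.rho n k * UVB.rho n (k + 1))
  rw [← mul_assoc]; exact rel_c k h1 h2

lemma conj2_eq {k : ℕ} {x y : UVB n}
    (h : SemiconjBy (UVB.rho n k * UVB.rho n (k + 1)) x y) :
    UVB.rho n k * UVB.rho n (k + 1) * x * UVB.rho n (k + 1) * UVB.rho n k = y := by
  calc UVB.rho n k * UVB.rho n (k + 1) * x * UVB.rho n (k + 1) * UVB.rho n k
      = ((UVB.rho n k * UVB.rho n (k + 1)) * x) * (UVB.rho n (k + 1) * UVB.rho n k) := by
        group
    _ = (y * (UVB.rho n k * UVB.rho n (k + 1))) * (UVB.rho n (k + 1) * UVB.rho n k) := by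
        rw [h.eq]
    _ = y * (UVB.rho n k * ((UVB.rho n (k + 1) * UVB.rho n (k + 1)) * UVB.rho n k)) := by
        group
    _ = y := by rw [rho_sq, one_mul, rho_sq, mul_one]

/-- ρ_k ρ_{k+1} (ρ_k σ_k⁻¹) ρ_{k+1} ρ_k = ρ_{k+1} σ_{k+1}⁻¹ -/
lemma C3p (k : ℕ) (h1 : 1 ≤ k) (h2 : k + 1 ≤ n - 1) :
    UVB.rho n k * UVB.rho n (k + 1) * (UVB.rho n k * (UVB.sigma n k)⁻¹) *
      UVB.rho n (k + 1) * UVB.rho n k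
      = UVB.rho n (k + 1) * (UVB.sigma n (k + 1))⁻¹ :=
  conj2_eq ((s_rho k h1 h2).mul_right (s_sigma k h1 h2).inv_right)

lemma C3m (k : ℕ) (h1 : 1 ≤ k) (h2 : k + 1 ≤ n - 1) :
    UVB.rho n k * UVB.rho n (k + 1) * ((UVB.sigma n k)⁻¹ * UVB.rho n k) *
      UVB.rho n (k + 1) * UVB.rho n k
      = (UVB.sigma n (k + 1))⁻¹ * UVB.rho n (k + 1) :=
  conj2_eq ((s_sigma k h1 h2).inv_right.mul_right (s_rho k h1 h2))

lemma C2p (k : ℕ) (h1 : 1 ≤ k) (h2 : k + 1 ≤ n - 1) :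
    UVB.rho n k * (UVB.rho n (k + 1) * (UVB.sigma n (k + 1))⁻¹) * UVB.rho n k
      = UVB.rho n (k + 1) * (UVB.rho n k * (UVB.sigma n k)⁻¹) * UVB.rho n (k + 1) := by
  have h3 := C3p k h1 h2
  calc UVB.rho n k * (UVB.rho n (k + 1) * (UVB.sigma n (k + 1))⁻¹) * UVB.rho n k
      = UVB.rho n k * (UVB.rho n k * UVB.rho n (k + 1) * (UVB.rho n k * (UVB.sigma n k)⁻¹) *
          UVB.rho n (k + 1) * UVB.rho n k) * UVB.rho n k := by rw [h3]
    _ = (UVB.rho n k * UVB.rho n k) *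
          (UVB.rho n (k + 1) * (UVB.rho n k * (UVB.sigma n k)⁻¹) * UVB.rho n (k + 1)) *
          (UVB.rho n k * UVB.rho n k) := by group
    _ = UVB.rho n (k + 1) * (UVB.rho n k * (UVB.sigma n k)⁻¹) * UVB.rho n (k + 1) := by
        rw [rho_sq, one_mul, mul_one]

lemma C2m (k : ℕ) (h1 : 1 ≤ k) (h2 : k + 1 ≤ n - 1) :
    UVB.rho n k * ((UVB.sigma n (k + 1))⁻¹ * UVB.rho n (k + 1)) * UVB.rho n k
      = UVB.rho n (k + 1) * ((UVB.sigma n k)⁻¹ * UVB.rho n k) * UVB.rho n (k + 1) := by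
  have h3 := C3m k h1 h2
  calc UVB.rho n k * ((UVB.sigma n (k + 1))⁻¹ * UVB.rho n (k + 1)) * UVB.rho n k
      = UVB.rho n k * (UVB.rho n k * UVB.rho n (k + 1) * ((UVB.sigma n k)⁻¹ * UVB.rho n k) *
          UVB.rho n (k + 1) * UVB.rho n k) * UVB.rho n k := by rw [h3]
    _ = (UVB.rho n k * UVB.rho n k) *
          (UVB.rho n (k + 1) * ((UVB.sigma n k)⁻¹ * UVB.rho n k) * UVB.rho n (k + 1)) *
          (UVB.rho n k * UVB.rho n k) := by group
    _ = UVB.rho n (k + 1) * ((UVB.sigma n k)⁻¹ * UVB.rho n k) * UVB.rho n (k + 1) := by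
        rw [rho_sq, one_mul, mul_one]

lemma commute_rho_corep (k i : ℕ) (hk1 : 1 ≤ k) (hk2 : k ≤ n - 1)
    (hi1 : 1 ≤ i) (hi2 : i ≤ n - 1) (h : k + 2 ≤ i ∨ i + 2 ≤ k) :
    Commute (UVB.rho n k) (UVB.rho n i * (UVB.sigma n i)⁻¹) :=
  (commute_rho_rho k i hk1 hk2 hi1 hi2 h).mul_right
    (commute_rho_sigma k i hk1 hk2 hi1 hi2 h).inv_right

lemma commute_rho_corem (k i : ℕ) (hk1 : 1 ≤ k) (hk2 : k ≤ n - 1)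
    (hi1 : 1 ≤ i) (hi2 : i ≤ n - 1) (h : k + 2 ≤ i ∨ i + 2 ≤ k) :
    Commute (UVB.rho n k) ((UVB.sigma n i)⁻¹ * UVB.rho n i) :=
  (commute_rho_sigma k i hk1 hk2 hi1 hi2 h).inv_right.mul_right
    (commute_rho_rho k i hk1 hk2 hi1 hi2 h)

lemma rho_conj_conj (k : ℕ) (x : UVB n) :
    UVB.rho n k * (UVB.rho n k * x * UVB.rho n k) * UVB.rho n k = x := by
  calc UVB.rho n k * (UVB.rho n k * x * UVB.rho n k) * UVB.rho n k
      = (UVB.rho n k * UVB.rho n k) * x * (UVB.rho n k * UVB.rho n k) := by group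
    _ = x := by rw [rho_sq, one_mul, mul_one]

lemma C4p (k : ℕ) :
    UVB.rho n k * (UVB.rho n k * (UVB.sigma n k)⁻¹) * UVB.rho n k
      = (UVB.sigma n k)⁻¹ * UVB.rho n k := by
  calc UVB.rho n k * (UVB.rho n k * (UVB.sigma n k)⁻¹) * UVB.rho n k
      = (UVB.rho n k * UVB.rho n k) * ((UVB.sigma n k)⁻¹ * UVB.rho n k) := by group
    _ = _ := by rw [rho_sq, one_mul]

lemma C4m (k : ℕ) :
    UVB.rho n k * ((UVB.sigma n k)⁻¹ * UVB.rho n k) * UVB.rho n k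
      = UVB.rho n k * (UVB.sigma n k)⁻¹ := by
  calc UVB.rho n k * ((UVB.sigma n k)⁻¹ * UVB.rho n k) * UVB.rho n k
      = (UVB.rho n k * (UVB.sigma n k)⁻¹) * (UVB.rho n k * UVB.rho n k) := by group
    _ = _ := by rw [rho_sq, mul_one]

end UVBP
namespace UVBP
variable {n : ℕ}

lemma chain_zero (i : ℕ) (c : UVB n) : chain n i (i + 1) c = c := by
  rw [chain, show i + 1 - 1 - i = 0 by omega, Rr_zero]; simp

lemma chain_succ (i j : ℕ) (hij : i < j) (c : UVB n) :
    chain n i (j + 1) c = UVB.rho n j * chain n i j c * UVB.rho n j := by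
  rw [chain, chain, show j + 1 - 1 - i = (j - 1 - i) + 1 by omega, Rr_succ_right,
    show i + 1 + (j - 1 - i) = j by omega, mul_inv_rev, rho_inv]
  group

lemma chain_conj_far (i j k : ℕ) (c : UVB n) (hi : 1 ≤ i) (hij : i < j) (hj : j ≤ n)
    (hk1 : 1 ≤ k) (hk2 : k ≤ n - 1) (hfar : k + 1 < i ∨ j < k)
    (hc : Commute (UVB.rho n k) c) :
    UVB.rho n k * chain n i j c * UVB.rho n k = chain n i j c := by
  have hR : Commute (UVB.rho n k) (Rr n (i + 1) (j - 1 - i)) :=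
    commute_rho_Rr k (i + 1) (j - 1 - i) hk1 hk2
      (fun x hx1 hx2 => ⟨⟨by omega, by omega⟩, by omega⟩)
  have : Commute (UVB.rho n k) (chain n i j c) := by
    rw [chain]; exact (hR.inv_right.mul_right hc).mul_right hR
  exact conj_of_commute this (rho_sq k)

lemma chain_conj_mid (i j k : ℕ) (c : UVB n) (hi : 1 ≤ i) (hik : i < k) (hkj : k < j - 1)
    (hj : j ≤ n) (hc : Commute (UVB.rho n (k + 1)) c) :
    UVB.rho n k * chain n i j c * UVB.rho n k = chain n i j c := by
  have hk1 : 1 ≤ k := by omega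
  have hk2 : k + 1 ≤ n - 1 := by omega
  have hsplit : Rr n (i + 1) (j - 1 - i)
      = Rr n (i + 1) (k - 1 - i) * (UVB.rho n k * (UVB.rho n (k + 1) * Rr n (k + 2) (j - 2 - k))) := by
    rw [show j - 1 - i = (k - 1 - i) + ((j - 2 - k) + 1 + 1) by omega, Rr_append,
      show i + 1 + (k - 1 - i) = k by omega, Rr_succ_left, Rr_succ_left]
  set A := Rr n (k + 2) (j - 2 - k) with hA_def
  set B := Rr n (i + 1) (k - 1 - i) with hB_def
  have hA : Commute (UVB.rho n k) A :=
    commute_rho_Rr k (k + 2) (j - 2 - k) hk1 (by omega)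
      (fun x hx1 hx2 => ⟨⟨by omega, by omega⟩, by omega⟩)
  have hB : Commute (UVB.rho n (k + 1)) B :=
    commute_rho_Rr (k + 1) (i + 1) (k - 1 - i) (by omega) hk2
      (fun x hx1 hx2 => ⟨⟨by omega, by omega⟩, by omega⟩)
  have hW : Commute (UVB.rho n (k + 1)) (B⁻¹ * c * B) :=
    (hB.inv_right.mul_right hc).mul_right hB
  have key : chain n i j c
      = A⁻¹ * (UVB.rho n (k + 1) * (UVB.rho n k * (B⁻¹ * c * B) * UVB.rho n k) *
          UVB.rho n (k + 1)) * A := by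
    rw [chain, hsplit]
    simp only [mul_inv_rev, rho_inv]
    group
  rw [key]
  calc UVB.rho n k * (A⁻¹ * (UVB.rho n (k + 1) * (UVB.rho n k * (B⁻¹ * c * B) * UVB.rho n k) *
          UVB.rho n (k + 1)) * A) * UVB.rho n k
      = A⁻¹ * (UVB.rho n k * (UVB.rho n (k + 1) * (UVB.rho n k * (B⁻¹ * c * B) * UVB.rho n k) *
          UVB.rho n (k + 1)) * UVB.rho n k) * A := sand hA
    _ = A⁻¹ * ((UVB.rho n k * UVB.rho n (k + 1) * UVB.rho n k) * (B⁻¹ * c * B) *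
          (UVB.rho n k * UVB.rho n (k + 1) * UVB.rho n k)) * A := by rw [conj3]
    _ = A⁻¹ * ((UVB.rho n (k + 1) * UVB.rho n k * UVB.rho n (k + 1)) * (B⁻¹ * c * B) *
          (UVB.rho n (k + 1) * UVB.rho n k * UVB.rho n (k + 1))) * A := by
        rw [braid_rr k hk1 hk2]
    _ = A⁻¹ * (UVB.rho n (k + 1) * (UVB.rho n k * (UVB.rho n (k + 1) * (B⁻¹ * c * B) *
          UVB.rho n (k + 1)) * UVB.rho n k) * UVB.rho n (k + 1)) * A := by rw [← conj3]
    _ = A⁻¹ * (UVB.rho n (k + 1) * (UVB.rho n k * (B⁻¹ * c * B) * UVB.rho n k) *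
          UVB.rho n (k + 1)) * A := by rw [conj_of_commute hW (rho_sq (k + 1))]

lemma chain_down (i j : ℕ) (c c' : UVB n) (h2i : 2 ≤ i) (hij : i < j) (hj : j ≤ n)
    (hcc : UVB.rho n (i - 1) * c * UVB.rho n (i - 1) = UVB.rho n i * c' * UVB.rho n i) :
    UVB.rho n (i - 1) * chain n i j c * UVB.rho n (i - 1) = chain n (i - 1) j c' := by
  have hR : Commute (UVB.rho n (i - 1)) (Rr n (i + 1) (j - 1 - i)) :=
    commute_rho_Rr (i - 1) (i + 1) (j - 1 - i) (by omega) (by omega)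
      (fun x hx1 hx2 => ⟨⟨by omega, by omega⟩, by omega⟩)
  have key : chain n (i - 1) j c'
      = (Rr n (i + 1) (j - 1 - i))⁻¹ * (UVB.rho n i * c' * UVB.rho n i) *
          Rr n (i + 1) (j - 1 - i) := by
    rw [chain, show j - 1 - (i - 1) = (j - 1 - i) + 1 by omega,
      show i - 1 + 1 = i by omega, Rr_succ_left, mul_inv_rev, rho_inv]
    group
  calc UVB.rho n (i - 1) * chain n i j c * UVB.rho n (i - 1)
      = (Rr n (i + 1) (j - 1 - i))⁻¹ * (UVB.rho n (i - 1) * c * UVB.rho n (i - 1)) *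
          Rr n (i + 1) (j - 1 - i) := by rw [chain]; exact sand hR
    _ = (Rr n (i + 1) (j - 1 - i))⁻¹ * (UVB.rho n i * c' * UVB.rho n i) *
          Rr n (i + 1) (j - 1 - i) := by rw [hcc]
    _ = chain n (i - 1) j c' := key.symm

lemma chain_up (i j : ℕ) (c c' : UVB n) (hi : 1 ≤ i) (hij : i + 1 < j) (hj : j ≤ n)
    (hcc : UVB.rho n i * UVB.rho n (i + 1) * c * UVB.rho n (i + 1) * UVB.rho n i = c') :
    UVB.rho n i * chain n i j c * UVB.rho n i = chain n (i + 1) j c' := by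
  have hA : Commute (UVB.rho n i) (Rr n (i + 2) (j - 2 - i)) :=
    commute_rho_Rr i (i + 2) (j - 2 - i) hi (by omega)
      (fun x hx1 hx2 => ⟨⟨by omega, by omega⟩, by omega⟩)
  have key : chain n i j c
      = (Rr n (i + 2) (j - 2 - i))⁻¹ * (UVB.rho n (i + 1) * c * UVB.rho n (i + 1)) *
          Rr n (i + 2) (j - 2 - i) := by
    rw [chain, show j - 1 - i = (j - 2 - i) + 1 by omega, Rr_succ_left, mul_inv_rev, rho_inv]
    group
  have key2 : chain n (i + 1) j c' = (Rr n (i + 2) (j - 2 - i))⁻¹ * c' * Rr n (i + 2) (j - 2 - i) := by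
    rw [chain, show j - 1 - (i + 1) = j - 2 - i by omega]
  calc UVB.rho n i * chain n i j c * UVB.rho n i
      = (Rr n (i + 2) (j - 2 - i))⁻¹ *
          (UVB.rho n i * (UVB.rho n (i + 1) * c * UVB.rho n (i + 1)) * UVB.rho n i) *
          Rr n (i + 2) (j - 2 - i) := by rw [key]; exact sand hA
    _ = (Rr n (i + 2) (j - 2 - i))⁻¹ *
          (UVB.rho n i * UVB.rho n (i + 1) * c * UVB.rho n (i + 1) * UVB.rho n i) *
          Rr n (i + 2) (j - 2 - i) := by group
    _ = (Rr n (i + 2) (j - 2 - i))⁻¹ * c' * Rr n (i + 2) (j - 2 - i) := by rw [hcc]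
    _ = chain n (i + 1) j c' := key2.symm

end UVBP

open UVBP

/-- conjugation rules, Lemma 1 of the paper.  For `n ≥ 2`, in `UVB n`:
(1) ρ_k λ_{i,j} ρ_k = λ_{i,j} and ρ_k λ_{j,i} ρ_k = λ_{j,i} for 1 ≤ i < j ≤ n and
k < i−1 or i < k < j−1 or k > j;
(2) ρ_{i−1} λ_{i,j} ρ_{i−1} = λ_{i−1,j}, ρ_{i−1} λ_{j,i} ρ_{i−1} = λ_{j,i−1} for 1 < i < j ≤ n;
(3) ρ_i λ_{i,i+1} ρ_i = λ_{i+1,i}, ρ_i λ_{i+1,i} ρ_i = λ_{i,i+1}, and for i < j−1 also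
ρ_i λ_{i,j} ρ_i = λ_{i+1,j}, ρ_i λ_{j,i} ρ_i = λ_{j,i+1};
(4) ρ_{j−1} λ_{i,j} ρ_{j−1} = λ_{i,j−1}, ρ_{j−1} λ_{j,i} ρ_{j−1} = λ_{j−1,i} for i+1 < j ≤ n;
(5) ρ_j λ_{i,j} ρ_j = λ_{i,j+1}, ρ_j λ_{j,i} ρ_j = λ_{j+1,i} for 1 ≤ i < j < n. -/
theorem statement4 (n : ℕ) (hn : 2 ≤ n) :
    (∀ i j k : ℕ, 1 ≤ i → i < j → j ≤ n → 1 ≤ k → k ≤ n - 1 →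
        (k < i - 1 ∨ (i < k ∧ k < j - 1) ∨ j < k) →
        UVB.rho n k * UVB.lam n i j * UVB.rho n k = UVB.lam n i j ∧
        UVB.rho n k * UVB.lam n j i * UVB.rho n k = UVB.lam n j i) ∧
    (∀ i j : ℕ, 1 < i → i < j → j ≤ n →
        UVB.rho n (i - 1) * UVB.lam n i j * UVB.rho n (i - 1) = UVB.lam n (i - 1) j ∧
        UVB.rho n (i - 1) * UVB.lam n j i * UVB.rho n (i - 1) = UVB.lam n j (i - 1)) ∧
    (∀ i j : ℕ, 1 ≤ i → i < j → j ≤ n →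
        (UVB.rho n i * UVB.lam n i (i + 1) * UVB.rho n i = UVB.lam n (i + 1) i ∧
         UVB.rho n i * UVB.lam n (i + 1) i * UVB.rho n i = UVB.lam n i (i + 1)) ∧
        (i < j - 1 →
         UVB.rho n i * UVB.lam n i j * UVB.rho n i = UVB.lam n (i + 1) j ∧
         UVB.rho n i * UVB.lam n j i * UVB.rho n i = UVB.lam n j (i + 1))) ∧
    (∀ i j : ℕ, 1 ≤ i → i + 1 < j → j ≤ n →
        UVB.rho n (j - 1) * UVB.lam n i j * UVB.rho n (j - 1) = UVB.lam n i (j - 1) ∧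
        UVB.rho n (j - 1) * UVB.lam n j i * UVB.rho n (j - 1) = UVB.lam n (j - 1) i) ∧
    (∀ i j : ℕ, 1 ≤ i → i < j → j < n →
        UVB.rho n j * UVB.lam n i j * UVB.rho n j = UVB.lam n i (j + 1) ∧
        UVB.rho n j * UVB.lam n j i * UVB.rho n j = UVB.lam n (j + 1) i) := by
  refine ⟨?_, ?_, ?_, ?_, ?_⟩
  · -- Part 1
    intro i j k hi hij hj hk1 hk2 hcase
    constructor
    · rw [lam_lt i j hij]
      rcases hcase with h | ⟨h1, h2⟩ | h
      · exact chain_conj_far i j k _ hi hij hj hk1 hk2 (Or.inl (by omega))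
          (commute_rho_corep k i hk1 hk2 hi (by omega) (by omega))
      · exact chain_conj_mid i j k _ hi h1 h2 hj
          (commute_rho_corep (k + 1) i (by omega) (by omega) hi (by omega) (by omega))
      · exact chain_conj_far i j k _ hi hij hj hk1 hk2 (Or.inr h)
          (commute_rho_corep k i hk1 hk2 hi (by omega) (by omega))
    · rw [lam_gt i j hij]
      rcases hcase with h | ⟨h1, h2⟩ | h
      · exact chain_conj_far i j k _ hi hij hj hk1 hk2 (Or.inl (by omega))
          (commute_rho_corem k i hk1 hk2 hi (by omega) (by omega))
      · exact chain_conj_mid i j k _ hi h1 h2 hj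
          (commute_rho_corem (k + 1) i (by omega) (by omega) hi (by omega) (by omega))
      · exact chain_conj_far i j k _ hi hij hj hk1 hk2 (Or.inr h)
          (commute_rho_corem k i hk1 hk2 hi (by omega) (by omega))
  · -- Part 2
    intro i j h1i hij hj
    have hp := C2p (n := n) (i - 1) (by omega) (by omega)
    have hm := C2m (n := n) (i - 1) (by omega) (by omega)
    rw [show i - 1 + 1 = i by omega] at hp hm
    constructor
    · rw [lam_lt i j hij, lam_lt (i - 1) j (by omega)]
      exact chain_down i j _ _ (by omega) hij hj hp
    · rw [lam_gt i j hij, lam_gt (i - 1) j (by omega)]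
      exact chain_down i j _ _ (by omega) hij hj hm
  · -- Part 3
    intro i j hi hij hj
    refine ⟨⟨?_, ?_⟩, fun hij1 => ⟨?_, ?_⟩⟩
    · rw [lam_lt i (i + 1) (by omega), lam_gt i (i + 1) (by omega), chain_zero, chain_zero]
      exact C4p i
    · rw [lam_lt i (i + 1) (by omega), lam_gt i (i + 1) (by omega), chain_zero, chain_zero]
      exact C4m i
    · rw [lam_lt i j hij, lam_lt (i + 1) j (by omega)]
      exact chain_up i j _ _ hi (by omega) hj (C3p i (by omega) (by omega))
    · rw [lam_gt i j hij, lam_gt (i + 1) j (by omega)]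
      exact chain_up i j _ _ hi (by omega) hj (C3m i (by omega) (by omega))
  · -- Part 4
    intro i j hi hij hj
    have hrec : ∀ c : UVB n, chain n i j c
        = UVB.rho n (j - 1) * chain n i (j - 1) c * UVB.rho n (j - 1) := by
      intro c
      have h := chain_succ i (j - 1) (by omega) c
      rwa [show j - 1 + 1 = j by omega] at h
    constructor
    · rw [lam_lt i j (by omega), lam_lt i (j - 1) (by omega), hrec]
      exact rho_conj_conj _ _
    · rw [lam_gt i j (by omega), lam_gt i (j - 1) (by omega), hrec]
      exact rho_conj_conj _ _
  · -- Part 5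
    intro i j hi hij hj
    constructor
    · rw [lam_lt i j hij, lam_lt i (j + 1) (by omega), chain_succ i j hij]
    · rw [lam_gt i j hij, lam_gt i (j + 1) (by omega), chain_succ i j hij]
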